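/- Let G : ℝᵈ → Mat(d,d) be differentiable, symmetric positive-definite valued, π : ℝᵈ → ℝ positive C², and suppose ∂G_{km}/∂x_j = ∂G_{jm}/∂x_k for all j,k,m. Then the drift b_i(x) = (1/2)Σ_j G⁻¹_{ij}(x)∂_{x_j}log π(x) + Ω_i(x), with Ω_i = |G|^{−1/2}Σ_j ∂_{x_j}[G⁻¹_{ij}|G|^{1/2}], and diffusion matrix V = G⁻¹ satisfy the Fokker–Planck stationarity condition b_i π = (1/2)Σ_j ∂_{x_j}(G⁻¹_{ij} π) for all i and x; i.e., the (uncorrected) MMALA diffusion has invariant density π under the integrability condition. -/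

import Mathlib

noncomputable def pd {d : ℕ} (f : (Fin d → ℝ) → ℝ) (x : Fin d → ℝ) (j : Fin d) : ℝ :=
  fderiv ℝ f x (Pi.single j 1)

open Matrix

variable {d : ℕ}

/-- determinant as a continuous multilinear map in the rows -/
noncomputable def detCM (d : ℕ) : ContinuousMultilinearMap ℝ (fun _ : Fin d => (Fin d → ℝ)) ℝ :=
  { toMultilinearMap := (Matrix.detRowAlternating (R := ℝ) (n := Fin d)).toMultilinearMap
    cont := by
      have h : ⇑((Matrix.detRowAlternating (R := ℝ) (n := Fin d)).toMultilinearMap)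
          = fun m : Fin d → Fin d → ℝ => Matrix.det (Matrix.of m) := rfl
      show Continuous fun m : Fin d → Fin d → ℝ => Matrix.det (Matrix.of m)
      simp only [Matrix.det_apply']
      refine continuous_finset_sum _ fun σ _ => Continuous.mul continuous_const ?_
      exact continuous_finset_prod _ fun i _ =>
        (continuous_apply i).comp (continuous_apply (σ i)) }

lemma detCM_apply (m : Fin d → Fin d → ℝ) : detCM d m = Matrix.det (Matrix.of m) := rfl

lemma hasFDerivAt_detM (M : (Fin d → ℝ) → Matrix (Fin d) (Fin d) ℝ)
    (hM : ∀ a b, Differentiable ℝ fun y => M y a b) (x : Fin d → ℝ) :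
    HasFDerivAt (fun y => (M y).det)
      (∑ k, ((detCM d).toContinuousLinearMap (fun l => M x l) k) ∘L
        (fderiv ℝ (fun y => M y k) x)) x := by
  have hrow : ∀ k, HasFDerivAt (fun y => M y k) (fderiv ℝ (fun y => M y k) x) x := by
    intro k
    exact (differentiable_pi.2 fun b => hM k b).differentiableAt.hasFDerivAt
  exact HasFDerivAt.multilinear_comp (detCM d) hrow

lemma differentiable_detM (M : (Fin d → ℝ) → Matrix (Fin d) (Fin d) ℝ)
    (hM : ∀ a b, Differentiable ℝ fun y => M y a b) :
    Differentiable ℝ fun y => (M y).det :=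
  fun x => (hasFDerivAt_detM M hM x).differentiableAt

lemma det_updateRow_eq_sum (A : Matrix (Fin d) (Fin d) ℝ) (k : Fin d) (v : Fin d → ℝ) :
    (A.updateRow k v).det = ∑ m, v m * A.adjugate m k := by
  have hv : v = ∑ m, v m • (Pi.single m 1 : Fin d → ℝ) := by
    ext a; simp [Pi.single_apply]
  have h1 : (A.updateRow k v).det
      = (Matrix.detRowAlternating (R := ℝ) (n := Fin d)).toMultilinearMap
          (Function.update (fun l => A l) k v) := rfl
  rw [h1, show Function.update (fun l => A l) k v
      = Function.update (fun l => A l) k (∑ m, v m • (Pi.single m 1 : Fin d → ℝ)) from by rw [← hv],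
    MultilinearMap.map_update_sum]
  refine Finset.sum_congr rfl fun m _ => ?_
  rw [MultilinearMap.map_update_smul, smul_eq_mul]
  congr 1
  rw [Matrix.adjugate_apply]
  rfl

lemma pd_detM (M : (Fin d → ℝ) → Matrix (Fin d) (Fin d) ℝ)
    (hM : ∀ a b, Differentiable ℝ fun y => M y a b) (x : Fin d → ℝ) (j : Fin d) :
    pd (fun y => (M y).det) x j
      = ∑ k, ∑ m, pd (fun y => M y k m) x j * (M x).adjugate m k := by
  have h := (hasFDerivAt_detM M hM x).fderiv
  rw [pd, h]
  simp only [ContinuousLinearMap.coe_sum', Finset.sum_apply, ContinuousLinearMap.coe_comp',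
    Function.comp_apply]
  refine Finset.sum_congr rfl fun k _ => ?_
  have h2 : (fderiv ℝ (fun y => M y k) x) (Pi.single j 1)
      = fun m => pd (fun y => M y k m) x j := by
    ext m
    rw [pd, fderiv_pi (fun b => (hM k b).differentiableAt)]
    rfl
  show (detCM d) (Function.update (fun l => M x l) k
      ((fderiv ℝ (fun y => M y k) x) (Pi.single j 1))) = _
  rw [h2]
  have h3 : (detCM d) (Function.update (fun l => M x l) k
      (fun m => pd (fun y => M y k m) x j))
      = ((M x).updateRow k (fun m => pd (fun y => M y k m) x j)).det := rfl
  rw [h3, det_updateRow_eq_sum]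

lemma pd_mul {f g : (Fin d → ℝ) → ℝ} {x : Fin d → ℝ} (hf : DifferentiableAt ℝ f x)
    (hg : DifferentiableAt ℝ g x) (j : Fin d) :
    pd (fun y => f y * g y) x j = pd f x j * g x + f x * pd g x j := by
  unfold pd
  rw [fderiv_fun_mul hf hg]
  simp
  ring

lemma pd_sum {ι : Type*} {s : Finset ι} {f : ι → (Fin d → ℝ) → ℝ} {x : Fin d → ℝ}
    (h : ∀ k ∈ s, DifferentiableAt ℝ (f k) x) (j : Fin d) :
    pd (fun y => ∑ k ∈ s, f k y) x j = ∑ k ∈ s, pd (f k) x j := by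
  unfold pd
  rw [fderiv_fun_sum h]
  simp

lemma pd_const (c : ℝ) (x : Fin d → ℝ) (j : Fin d) : pd (fun _ => c) x j = 0 := by
  unfold pd; simp

section Inv

variable (G : (Fin d → ℝ) → Matrix (Fin d) (Fin d) ℝ)
  (hGdiff : ∀ i j, Differentiable ℝ (fun x => G x i j))
  (hGdet : ∀ x, (G x).det ≠ 0)

include hGdiff in
lemma diff_adj : ∀ a b, Differentiable ℝ fun y => (G y).adjugate a b := by
  intro a b
  have h : (fun y => (G y).adjugate a b)
      = fun y => ((G y).updateRow b (Pi.single a 1)).det := by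
    funext y; rw [Matrix.adjugate_apply]
  rw [h]
  refine differentiable_detM _ fun k m => ?_
  rcases eq_or_ne k b with rfl | hk
  · simpa using differentiable_const _
  · simpa [Matrix.updateRow_apply, hk] using hGdiff k m

include hGdiff hGdet in
lemma diff_inv : ∀ a b, Differentiable ℝ fun y => (G y)⁻¹ a b := by
  intro a b
  have h : (fun y => (G y)⁻¹ a b)
      = fun y => ((G y).det)⁻¹ * (G y).adjugate a b := by
    funext y
    rw [Matrix.inv_def]
    simp [Ring.inverse_eq_inv']
  rw [h]
  exact ((differentiable_detM G hGdiff).inv hGdet).mul (diff_adj G hGdiff a b)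

include hGdiff hGdet in
lemma pd_inv_entry (x : Fin d → ℝ) (a b l : Fin d) :
    pd (fun y => (G y)⁻¹ a b) x l
      = -∑ p, ∑ q, (G x)⁻¹ a p * pd (fun y => G y p q) x l * (G x)⁻¹ q b := by
  have hU : ∀ y, IsUnit (G y).det := fun y => (Ne.isUnit (hGdet y))
  have key : ∀ i : Fin d, ∑ k, (pd (fun y => G y i k) x l * (G x)⁻¹ k b
      + G x i k * pd (fun y => (G y)⁻¹ k b) x l) = 0 := by
    intro i
    have h1 : (fun y => ∑ k, G y i k * (G y)⁻¹ k b) = fun _ => (1 : Matrix (Fin d) (Fin d) ℝ) i b := by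
      funext y
      rw [← Matrix.mul_apply, Matrix.mul_nonsing_inv _ (hU y)]
    have h2 := pd_sum (f := fun k y => G y i k * (G y)⁻¹ k b) (x := x) (s := Finset.univ)
      (fun k _ => ((hGdiff i k) x).mul ((diff_inv G hGdiff hGdet k b) x)) l
    rw [h1, pd_const] at h2
    rw [h2]
    refine (Finset.sum_congr rfl fun k _ => ?_).symm
    rw [pd_mul ((hGdiff i k) x) ((diff_inv G hGdiff hGdet k b) x)]
  have hAG : ∀ k, (∑ i, (G x)⁻¹ a i * G x i k) = if a = k then (1:ℝ) else 0 := by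
    intro k
    rw [← Matrix.mul_apply, Matrix.nonsing_inv_mul _ (hU x), Matrix.one_apply]
  calc pd (fun y => (G y)⁻¹ a b) x l
      = ∑ k, (if a = k then (1:ℝ) else 0) * pd (fun y => (G y)⁻¹ k b) x l := by
        simp
    _ = ∑ k, (∑ i, (G x)⁻¹ a i * G x i k) * pd (fun y => (G y)⁻¹ k b) x l := by
        simp_rw [hAG]
    _ = ∑ i, (G x)⁻¹ a i * ∑ k, G x i k * pd (fun y => (G y)⁻¹ k b) x l := by
        simp_rw [Finset.sum_mul, Finset.mul_sum]
        rw [Finset.sum_comm]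
        simp_rw [mul_assoc]
    _ = ∑ i, (G x)⁻¹ a i * (-∑ k, pd (fun y => G y i k) x l * (G x)⁻¹ k b) := by
        refine Finset.sum_congr rfl fun i _ => ?_
        congr 1
        have := key i
        rw [Finset.sum_add_distrib] at this
        linarith
    _ = -∑ p, ∑ q, (G x)⁻¹ a p * pd (fun y => G y p q) x l * (G x)⁻¹ q b := by
        rw [← Finset.sum_neg_distrib]
        refine Finset.sum_congr rfl fun p _ => ?_
        rw [mul_neg, Finset.mul_sum]
        congr 1
        refine Finset.sum_congr rfl fun q _ => ?_
        ring

end Inv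

/-- Under the integrability condition, the (uncorrected) MMALA drift
`b = (1/2)G⁻¹∇log π + Ω` with `Ωᵢ = |G|^{−1/2}Σⱼ∂ⱼ[G⁻¹ᵢⱼ|G|^{1/2}]` and diffusion
matrix `V = G⁻¹` satisfy the Fokker–Planck stationarity condition for `π`. -/
theorem stmt18 {d : ℕ} (G : (Fin d → ℝ) → Matrix (Fin d) (Fin d) ℝ)
    (hGdiff : ∀ i j, Differentiable ℝ (fun x => G x i j))
    (hGpd : ∀ x, (G x).PosDef)
    (π : (Fin d → ℝ) → ℝ) (hπpos : ∀ x, 0 < π x) (hπC2 : ContDiff ℝ 2 π)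
    (hint : ∀ (j k m : Fin d) (x : Fin d → ℝ),
      pd (fun y => G y k m) x j = pd (fun y => G y j m) x k) :
    ∀ (i : Fin d) (x : Fin d → ℝ),
      ((1 / 2) * ∑ j, (G x)⁻¹ i j * pd (fun y => Real.log (π y)) x j
          + (Real.sqrt (G x).det)⁻¹ *
              ∑ j, pd (fun y => (G y)⁻¹ i j * Real.sqrt (G y).det) x j) * π x =
        (1 / 2) * ∑ j, pd (fun y => (G y)⁻¹ i j * π y) x j := by
  intro i x
  have hdet : ∀ y, (G y).det ≠ 0 := fun y => (hGpd y).det_pos.ne'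
  have hDx : (0:ℝ) < (G x).det := (hGpd x).det_pos
  set s : ℝ := Real.sqrt (G x).det with hs_def
  have hs : 0 < s := Real.sqrt_pos.2 hDx
  have hss : s * s = (G x).det := Real.mul_self_sqrt hDx.le
  have hπd : Differentiable ℝ π := hπC2.differentiable (by norm_num)
  have hπx : π x ≠ 0 := (hπpos x).ne'
  have hA : ∀ a b, Differentiable ℝ fun y => (G y)⁻¹ a b := diff_inv G hGdiff hdet
  have hD : Differentiable ℝ fun y => (G y).det := differentiable_detM G hGdiff
  have hsqrtd : DifferentiableAt ℝ (fun y => Real.sqrt ((G y).det)) x :=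
    (hD x).sqrt (hdet x)
  -- log derivative
  have hlog : ∀ j, pd (fun y => Real.log (π y)) x j = (π x)⁻¹ * pd π x j := by
    intro j
    have h : HasFDerivAt (fun y => Real.log (π y)) ((π x)⁻¹ • fderiv ℝ π x) x :=
      (Real.hasDerivAt_log hπx).comp_hasFDerivAt x (hπd x).hasFDerivAt
    rw [pd, h.fderiv]
    simp [pd]
  -- sqrt derivative
  have hsq : ∀ j, pd (fun y => Real.sqrt ((G y).det)) x j
      = 1 / (2 * s) * pd (fun y => (G y).det) x j := by
    intro j
    have h : HasFDerivAt (fun y => Real.sqrt ((G y).det))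
        ((1 / (2 * Real.sqrt (G x).det)) • fderiv ℝ (fun y => (G y).det) x) x :=
      (Real.hasDerivAt_sqrt (hdet x)).comp_hasFDerivAt x (hD x).hasFDerivAt
    rw [pd, h.fderiv]
    simp [pd, hs_def]
  -- Jacobi
  have hadj : (G x).adjugate = (G x).det • (G x)⁻¹ := by
    rw [Matrix.inv_def, smul_smul, Ring.inverse_eq_inv', mul_inv_cancel₀ (hdet x), one_smul]
  have hJ : ∀ j, pd (fun y => (G y).det) x j
      = (G x).det * ∑ p, ∑ q, pd (fun y => G y p q) x j * (G x)⁻¹ q p := by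
    intro j
    rw [pd_detM G hGdiff x j, Finset.mul_sum]
    refine Finset.sum_congr rfl fun p _ => ?_
    rw [Finset.mul_sum]
    refine Finset.sum_congr rfl fun q _ => ?_
    rw [hadj, Matrix.smul_apply, smul_eq_mul]
    ring
  -- key identity (divergence of adjugate rows vanishes)
  have hkey : (G x).det * (∑ j, pd (fun y => (G y)⁻¹ i j) x j)
      + (∑ j, (G x)⁻¹ i j * pd (fun y => (G y).det) x j) = 0 := by
    have h1 : ∑ j, pd (fun y => (G y)⁻¹ i j) x j
        = -∑ j, ∑ p, ∑ q, (G x)⁻¹ i j * pd (fun y => G y j q) x p * (G x)⁻¹ q p := by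
      have step1 : ∑ j, pd (fun y => (G y)⁻¹ i j) x j
          = -∑ j, ∑ p, ∑ q, (G x)⁻¹ i p * pd (fun y => G y j q) x p * (G x)⁻¹ q j := by
        rw [← Finset.sum_neg_distrib]
        refine Finset.sum_congr rfl fun j _ => ?_
        rw [pd_inv_entry G hGdiff hdet x i j j]
        congr 1
        exact Finset.sum_congr rfl fun p _ => Finset.sum_congr rfl fun q _ => by
          rw [hint j p q x]
      rw [step1]
      congr 1
      rw [Finset.sum_comm]
      refine Finset.sum_congr rfl fun j _ => Finset.sum_congr rfl fun p _ =>
        Finset.sum_congr rfl fun q _ => ?_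
      rw [hint j p q x]
    have h2 : ∑ j, (G x)⁻¹ i j * pd (fun y => (G y).det) x j
        = (G x).det * ∑ j, ∑ p, ∑ q, (G x)⁻¹ i j * pd (fun y => G y j q) x p * (G x)⁻¹ q p := by
      rw [Finset.mul_sum]
      refine Finset.sum_congr rfl fun j _ => ?_
      rw [hJ j]
      simp_rw [Finset.mul_sum]
      refine Finset.sum_congr rfl fun p _ => Finset.sum_congr rfl fun q _ => ?_
      rw [hint j p q x]
      ring
    rw [h1, h2]
    ring
  -- rewrite the three pd's of products
  have hmul1 : ∀ j, pd (fun y => (G y)⁻¹ i j * Real.sqrt ((G y).det)) x j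
      = pd (fun y => (G y)⁻¹ i j) x j * s + (G x)⁻¹ i j *
          (1 / (2 * s) * pd (fun y => (G y).det) x j) := by
    intro j
    rw [pd_mul ((hA i j) x) hsqrtd, hsq j]
  have hmul2 : ∀ j, pd (fun y => (G y)⁻¹ i j * π y) x j
      = pd (fun y => (G y)⁻¹ i j) x j * π x + (G x)⁻¹ i j * pd π x j := by
    intro j
    rw [pd_mul ((hA i j) x) (hπd x)]
  simp only [hlog, hmul1, hmul2, Finset.sum_add_distrib]
  have e1 : ∑ j, (G x)⁻¹ i j * ((π x)⁻¹ * pd π x j)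
      = (π x)⁻¹ * ∑ j, (G x)⁻¹ i j * pd π x j := by
    rw [Finset.mul_sum]; exact Finset.sum_congr rfl fun j _ => by ring
  have e2 : ∑ j, pd (fun y => (G y)⁻¹ i j) x j * s
      = (∑ j, pd (fun y => (G y)⁻¹ i j) x j) * s := by rw [Finset.sum_mul]
  have e3 : ∑ j, (G x)⁻¹ i j * (1 / (2 * s) * pd (fun y => (G y).det) x j)
      = 1 / (2 * s) * ∑ j, (G x)⁻¹ i j * pd (fun y => (G y).det) x j := by
    rw [Finset.mul_sum]; exact Finset.sum_congr rfl fun j _ => by ring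
  have e4 : ∑ j, pd (fun y => (G y)⁻¹ i j) x j * π x
      = (∑ j, pd (fun y => (G y)⁻¹ i j) x j) * π x := by rw [Finset.sum_mul]
  rw [e1, e2, e3, e4]
  set S1 : ℝ := ∑ j, (G x)⁻¹ i j * pd π x j
  set S2 : ℝ := ∑ j, pd (fun y => (G y)⁻¹ i j) x j
  set S3 : ℝ := ∑ j, (G x)⁻¹ i j * pd (fun y => (G y).det) x j
  have hS3 : S3 = -((G x).det * S2) := by linarith [hkey]
  rw [hS3, ← hss]
  field_simp
  ring
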